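/- For every x ∈ G, the number of indices i ∈ Ω fixed by ρ(x) (i.e. with ρ(x)(i) = i) equals the number of indices j ∈ Ω fixed by σ(x) (i.e. with σ(x)(j) = j). -/

import Mathlib

/-- **Brauer Permutation Lemma (fixed-point count).**
Let `Ω` be a finite set, `K` a field of characteristic zero, `G` a group, and
`ρ, σ : G → Sym(Ω)` two actions of `G` on `Ω`.  Suppose `A` is an invertible
`Ω × Ω` matrix over `K` with `A (ρ x i) (σ x j) = A i j` for all `x, i, j`.
Then for every `x ∈ G` the number of points fixed by `ρ x` equals the number of
points fixed by `σ x`. -/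
theorem stmt0 {Ω : Type*} [Fintype Ω] [DecidableEq Ω]
    {K : Type*} [Field K] [CharZero K]
    {G : Type*} [Group G] (ρ σ : G →* Equiv.Perm Ω)
    (A : Matrix Ω Ω K) (hA : IsUnit A)
    (h : ∀ (x : G) (i j : Ω), A (ρ x i) (σ x j) = A i j) (x : G) :
    (Finset.univ.filter fun i : Ω => ρ x i = i).card
      = (Finset.univ.filter fun j : Ω => σ x j = j).card := by
  set P : Matrix Ω Ω K := (ρ x).permMatrix K
  set Q : Matrix Ω Ω K := (σ x).permMatrix K
  have key : P * A = A * Q := by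
    rw [show P * A = (ρ x).toPEquiv.toMatrix * A from rfl,
      PEquiv.toMatrix_toPEquiv_mul,
      show A * Q = A * (σ x).toPEquiv.toMatrix from rfl,
      PEquiv.mul_toMatrix_toPEquiv]
    ext i j
    simp only [Matrix.submatrix_apply, id]
    have := h x i ((σ x).symm j)
    simpa using this
  
  obtain ⟨u, hu⟩ := hA
  have hright : A * (↑u⁻¹ : Matrix Ω Ω K) = 1 := by rw [← hu]; exact u.mul_inv
  have hleft : (↑u⁻¹ : Matrix Ω Ω K) * A = 1 := by rw [← hu]; exact u.inv_mul
  have hinv : P = A * Q * (↑u⁻¹ : Matrix Ω Ω K) := by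
    have h2 : P * A * (↑u⁻¹ : Matrix Ω Ω K) = A * Q * (↑u⁻¹ : Matrix Ω Ω K) := by
      rw [key]
    rwa [Matrix.mul_assoc, hright, Matrix.mul_one] at h2
  have htr : Matrix.trace P = Matrix.trace Q := by
    rw [hinv, Matrix.trace_mul_cycle, Matrix.mul_assoc, ← Matrix.mul_assoc, hleft,
      Matrix.one_mul]
  have hP := Matrix.trace_permutation (R := K) (ρ x)
  have hQ := Matrix.trace_permutation (R := K) (σ x)
  rw [hP, hQ] at htr
  have : (Function.fixedPoints (ρ x)).ncard = (Function.fixedPoints (σ x)).ncard :=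
    Nat.cast_injective htr
  have e : ∀ τ : Equiv.Perm Ω, (Function.fixedPoints τ).ncard
      = (Finset.univ.filter fun i : Ω => τ i = i).card := by
    intro τ
    rw [Set.ncard_eq_toFinset_card']
    congr 1
    ext i
    rw [Set.mem_toFinset]
    simp [Function.fixedPoints, Function.IsFixedPt]
  rw [e, e] at this
  exact this
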